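/- Let p be a prime number and let R = ℤ/p²ℤ. Let C be the ℤ-indexed cochain complex of R-modules with C^n = R for every n ∈ ℤ and with every differential C^n → C^{n+1} given by multiplication by p. Then the endomorphism ring of C in the homotopy category K(Mod R) is a one-dimensional vector space over 𝔽_p = ℤ/pℤ; more precisely, there is a ring isomorphism End_{K(Mod R)}(C) ≅ 𝔽_p. -/

import Mathlib

open CategoryTheory CategoryTheory.Limits

namespace Paper8

/-- The cochain complex of `R`-modules which is `R` in every degree and whose differentials
are all given by multiplication by a fixed element `r` with `r * r = 0`. -/
noncomputable def Cx (R : Type) [CommRing R] (r : R) (h : r * r = 0) :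
    CochainComplex (ModuleCat R) ℤ :=
  CochainComplex.of (fun _ => ModuleCat.of R R)
    (fun _ => ModuleCat.ofHom (r • LinearMap.id))
    (fun _ => by
      apply ModuleCat.hom_ext
      apply LinearMap.ext
      intro x
      show r • (r • x) = 0
      rw [smul_smul, h, zero_smul])

/-- Multiplication by `p` squares to zero on `ℤ/p²ℤ`. -/
lemma p_mul_p (p : ℕ) : (p : ZMod (p ^ 2)) * (p : ZMod (p ^ 2)) = 0 := by
  rw [← Nat.cast_mul, ← pow_two, ZMod.natCast_self]

section aux

lemma zkey (p : ℕ) (hp : p.Prime) (x : ZMod (p ^ 2)) :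
    (p : ZMod (p ^ 2)) * x = 0 ↔
      (ZMod.castHom (dvd_pow_self p two_ne_zero) (ZMod p)) x = 0 := by
  haveI : NeZero (p ^ 2) := ⟨pow_ne_zero _ hp.ne_zero⟩
  rw [ZMod.castHom_apply, ZMod.cast_eq_val, ZMod.natCast_eq_zero_iff]
  conv_lhs => rw [show x = ((x.val : ℕ) : ZMod (p ^ 2)) from (ZMod.natCast_rightInverse x).symm,
    ← Nat.cast_mul]
  rw [ZMod.natCast_eq_zero_iff]
  constructor
  · rintro ⟨k, hk⟩
    refine ⟨k, Nat.eq_of_mul_eq_mul_left hp.pos ?_⟩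
    rw [hk]; ring
  · rintro ⟨k, hk⟩
    exact ⟨k, by rw [hk]; ring⟩

lemma zkey2 (p : ℕ) (hp : p.Prime) (x : ZMod (p ^ 2))
    (hx : (ZMod.castHom (dvd_pow_self p two_ne_zero) (ZMod p)) x = 0) :
    ∃ y : ZMod (p ^ 2), x = (p : ZMod (p ^ 2)) * y := by
  haveI : NeZero (p ^ 2) := ⟨pow_ne_zero _ hp.ne_zero⟩
  rw [ZMod.castHom_apply, ZMod.cast_eq_val, ZMod.natCast_eq_zero_iff] at hx
  obtain ⟨k, hk⟩ := hx
  exact ⟨k, by rw [show x = ((x.val : ℕ) : ZMod (p ^ 2)) from (ZMod.natCast_rightInverse x).symm,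
    hk, Nat.cast_mul]⟩

lemma lin_ev {A : Type} [CommRing A] (L : A →ₗ[A] A) (x : A) : L x = x * L 1 := by
  conv_lhs => rw [show x = x • (1 : A) by simp]
  rw [map_smul, smul_eq_mul]

variable {A : Type} [CommRing A]

noncomputable def ccpos (b : ℤ → A) : ℕ → A
  | 0 => 0
  | (k+1) => b k - ccpos b k

noncomputable def ccneg (b : ℤ → A) : ℕ → A
  | 0 => b (-1)
  | (k+1) => b (-(k+2 : ℤ)) - ccneg b k

noncomputable def cc (b : ℤ → A) : ℤ → A
  | Int.ofNat k => ccpos b k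
  | Int.negSucc k => ccneg b k

lemma cc_add (b : ℤ → A) (n : ℤ) : cc b n + cc b (n + 1) = b n := by
  cases n with
  | ofNat k =>
      have h1 : ((Int.ofNat k) + 1) = Int.ofNat (k + 1) := rfl
      rw [h1]
      show ccpos b k + ccpos b (k + 1) = b (Int.ofNat k)
      rw [ccpos]
      have : (Int.ofNat k) = (k : ℤ) := rfl
      rw [this]; ring
  | negSucc k =>
      cases k with
      | zero =>
          have h1 : (Int.negSucc 0 + 1) = Int.ofNat 0 := rfl
          rw [h1]
          show ccneg b 0 + ccpos b 0 = b (Int.negSucc 0)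
          rw [ccneg, ccpos]
          have : (Int.negSucc 0) = (-1 : ℤ) := rfl
          rw [this]; ring
      | succ k =>
          have h1 : (Int.negSucc (k+1) + 1) = Int.negSucc k := rfl
          rw [h1]
          show ccneg b (k+1) + ccneg b k = b (Int.negSucc (k+1))
          rw [ccneg]
          have : (Int.negSucc (k+1)) = (-(k+2 : ℤ)) := by
            rw [Int.negSucc_eq]; push_cast; ring
          rw [this]; ring

end aux

section main

variable (p : ℕ)

local notation "R" => ZMod (p ^ 2)
local notation "CC" => Cx (ZMod (p ^ 2)) (p : ZMod (p ^ 2)) (p_mul_p p)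

noncomputable def pr : ZMod (p ^ 2) →+* ZMod p :=
  ZMod.castHom (dvd_pow_self p two_ne_zero) (ZMod p)

noncomputable def ev (f : CC ⟶ CC) (n : ℤ) : R := f.f n (1 : R)

lemma Cx_d_apply (n : ℤ) (x : R) :
    ((CC).d n (n+1)).hom x = (p : R) * x := by
  unfold Cx
  simp only [CochainComplex.of_d]
  show (p : R) • x = (p : R) * x
  rw [smul_eq_mul]

lemma f_apply (f : CC ⟶ CC) (n : ℤ) (x : R) :
    (f.f n).hom x = x * ev p f n := by
  have : x = x • (1 : R) := by simp
  conv_lhs => rw [this]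
  erw [map_smul]
  show x * _ = _
  rfl

lemma ev_step (hp : p.Prime) (f : CC ⟶ CC) (n : ℤ) :
    pr p (ev p f n) = pr p (ev p f (n+1)) := by
  have hc := f.comm n (n+1)
  have hc1 := congrArg (fun (g : (CC).X n ⟶ (CC).X (n+1)) => g.hom (1 : R)) hc
  simp only [ModuleCat.hom_comp, LinearMap.comp_apply] at hc1
  have h1 : (p : R) * (ev p f n) = (p : R) * (ev p f (n+1)) := by
    have l := Cx_d_apply p n (ev p f n)
    have r := Cx_d_apply p n (1 : R)
    calc (p : R) * (ev p f n) = @id R (((CC).d n (n+1)).hom (ev p f n)) := l.symm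
      _ = @id R ((f.f (n+1)).hom (((CC).d n (n+1)).hom (1 : R))) := hc1
      _ = @id R ((f.f (n+1)).hom ((p : R) * 1)) := by rw [r]; rfl
      _ = ((p : R) * 1) * ev p f (n+1) := f_apply p f (n+1) _
      _ = (p : R) * ev p f (n+1) := by ring
  have h2 : (p : R) * (ev p f n - ev p f (n+1)) = 0 := by rw [mul_sub, h1, sub_self]
  have h3 := (zkey p hp _).mp h2
  rw [map_sub, sub_eq_zero] at h3
  exact h3

lemma ev_const (hp : p.Prime) (f : CC ⟶ CC) (n : ℤ) :
    pr p (ev p f n) = pr p (ev p f 0) := by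
  induction n using Int.induction_on with
  | zero => rfl
  | succ k ih => rw [← ev_step p hp f k, ih]
  | pred k ih =>
      have h := ev_step p hp f (-k - 1)
      rw [show ((-k : ℤ) - 1 + 1) = -k by ring] at h
      rw [h, ih]

lemma pr_p_mul (x : ZMod (p ^ 2)) : pr p ((p : ZMod (p ^ 2)) * x) = 0 := by
  rw [map_mul, map_natCast, ZMod.natCast_self, zero_mul]

lemma ev_homotopy_inv (f g : CC ⟶ CC) (H : Homotopy f g) :
    pr p (ev p f 0) = pr p (ev p g 0) := by
  have hc := H.comm 0
  rw [dNext_eq _ (show (ComplexShape.up ℤ).Rel 0 (0+1) from rfl),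
    prevD_eq _ (show (ComplexShape.up ℤ).Rel (0-1) 0 by simp)] at hc
  have h1 := congrArg (fun (g : (CC).X 0 ⟶ (CC).X 0) => g.hom (1 : R)) hc
  have expand : ((CC).d 0 (0+1) ≫ H.hom (0+1) 0 + H.hom 0 (0-1) ≫ (CC).d (0-1) 0
      + g.f 0).hom (1 : R)
      = ((CC).d 0 (0+1) ≫ H.hom (0+1) 0).hom (1 : R)
        + (H.hom 0 (0-1) ≫ (CC).d (0-1) 0).hom (1 : R)
        + (g.f 0).hom (1 : R) := rfl
  rw [expand] at h1
  have t1 : ∃ u : R, ((CC).d 0 (0+1) ≫ H.hom (0+1) 0).hom (1 : R) = (p : R) * u := by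
    refine ⟨(H.hom (0+1) 0).hom (1 : R), ?_⟩
    show (H.hom (0+1) 0).hom (((CC).d 0 (0+1)).hom (1 : R)) = _
    rw [Cx_d_apply p 0 (1 : R), mul_one]
    exact lin_ev (H.hom (0+1) 0).hom (p : R)
  have t2 : ∃ u : R, (H.hom 0 (0-1) ≫ (CC).d (0-1) 0).hom (1 : R) = (p : R) * u := by
    refine ⟨(H.hom 0 (0-1)).hom (1 : R), ?_⟩
    show ((CC).d (0-1) 0).hom ((H.hom 0 (0-1)).hom (1 : R)) = _
    have key : ∀ x : R, ((CC).d (0-1) 0).hom x = (p : R) * x := by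
      intro x
      have := Cx_d_apply p ((0:ℤ)-1) x
      rw [show ((0:ℤ) - 1 + 1) = 0 by ring] at this
      exact this
    erw [key]; rfl
  obtain ⟨u, hu⟩ := t1
  obtain ⟨v, hv⟩ := t2
  have : ev p f 0 = (p : R) * u + (p : R) * v + ev p g 0 := by
    show (f.f 0).hom (1 : R) = _
    rw [h1, hu, hv]
    rfl
  rw [this, map_add, map_add, pr_p_mul, pr_p_mul, zero_add, zero_add]

noncomputable def nullHomotopy (hp : p.Prime) (f : CC ⟶ CC) (h0 : pr p (ev p f 0) = 0) :
    Homotopy f 0 := by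
  have hz : ∀ n : ℤ, ∃ y : R, ev p f n = (p : R) * y := by
    intro n
    exact zkey2 p hp _ (by rw [show (ZMod.castHom (dvd_pow_self p two_ne_zero) (ZMod p)) = pr p
      from rfl, ev_const p hp f n, h0])
  set b : ℤ → R := fun n => Classical.choose (hz n) with hb
  have hbspec : ∀ n : ℤ, ev p f n = (p : R) * b n := fun n => Classical.choose_spec (hz n)
  have Cxd : ∀ (n m : ℤ), n + 1 = m → ∀ x : R, ((CC).d n m).hom x = (p : R) * x := by
    intro n m hnm x
    subst hnm
    exact Cx_d_apply p n x
  refine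
  { hom := fun i j => if h : j + 1 = i then ModuleCat.ofHom ((cc b i) • LinearMap.id) else 0
    zero := fun i j hij => dif_neg (fun h => hij h)
    comm := ?_ }
  intro i
  rw [dNext_eq _ (show (ComplexShape.up ℤ).Rel i (i+1) from rfl),
    prevD_eq _ (show (ComplexShape.up ℤ).Rel (i-1) i by simp)]
  have e1 : ((CC).d i (i+1) ≫
      (if h : i + 1 = i + 1 then (ModuleCat.ofHom ((cc b (i+1)) • LinearMap.id) :
        (CC).X (i+1) ⟶ (CC).X i) else 0)) =
      (ModuleCat.ofHom ((((p : R)) * cc b (i+1)) • LinearMap.id) : (CC).X i ⟶ (CC).X i) := by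
    erw [dif_pos rfl]
    apply ModuleCat.hom_ext
    apply LinearMap.ext
    intro (x : R)
    show @Eq R ((cc b (i+1)) • (((CC).d i (i+1)).hom x)) ((((p : R)) * cc b (i+1)) • x)
    rw [Cxd i (i+1) rfl x]
    show @Eq R (cc b (i+1) * ((p : R) * x)) ((p : R) * cc b (i+1) * x)
    ring
  have e2 : ((if h : (i - 1) + 1 = i then (ModuleCat.ofHom ((cc b i) • LinearMap.id) :
        (CC).X i ⟶ (CC).X (i-1)) else 0) ≫
      (CC).d (i-1) i) =
      (ModuleCat.ofHom ((((p : R)) * cc b i) • LinearMap.id) : (CC).X i ⟶ (CC).X i) := by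
    simp only [dif_pos (show i - 1 + 1 = i by ring)]
    apply ModuleCat.hom_ext
    apply LinearMap.ext
    intro (x : R)
    show @Eq R (((CC).d (i-1) i).hom ((cc b i) • x)) ((((p : R)) * cc b i) • x)
    rw [Cxd (i-1) i (by ring) _, smul_eq_mul, smul_eq_mul]
    ring
  erw [e1, e2]
  apply ModuleCat.hom_ext
  show (f.f i).hom
      = (((p : R) * cc b (i+1)) • LinearMap.id + ((p : R) * cc b i) • LinearMap.id
        + 0 : R →ₗ[R] R)
  apply LinearMap.ext
  intro (x : R)
  rw [f_apply p f i x, hbspec i]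
  show x * ((p : R) * b i)
      = ((p : R) * cc b (i+1)) * x + ((p : R) * cc b i) * x + 0
  have hcc := cc_add b i
  calc x * ((p : R) * b i) = (p : R) * (cc b i + cc b (i+1)) * x := by rw [hcc]; ring
    _ = (p : R) * cc b (i+1) * x + (p : R) * cc b i * x + 0 := by ring

local notation "Q" => HomotopyCategory.quotient (ModuleCat (ZMod (p ^ 2))) (ComplexShape.up ℤ)

noncomputable def psi (f : CC ⟶ CC) : ZMod p := pr p (ev p f 0)

lemma psi_congr (f g : CC ⟶ CC) (h : (Q).map f = (Q).map g) : psi p f = psi p g :=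
  ev_homotopy_inv p f g (HomotopyCategory.homotopyOfEq f g h)

noncomputable def Phi (F : End ((Q).obj CC)) : ZMod p := psi p (Quot.out F)

lemma Phi_map (f : CC ⟶ CC) : Phi p ((Q).map f) = psi p f :=
  psi_congr p _ f (HomotopyCategory.quotient_map_out ((Q).map f))

lemma psi_add (f g : CC ⟶ CC) : psi p (f + g) = psi p f + psi p g := by
  have : ev p (f + g) 0 = ev p f 0 + ev p g 0 := rfl
  rw [psi, psi, psi, this, map_add]

lemma psi_comp (f g : CC ⟶ CC) : psi p (f ≫ g) = psi p f * psi p g := by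
  have : ev p (f ≫ g) 0 = ev p f 0 * ev p g 0 := by
    show (g.f 0).hom ((f.f 0).hom (1 : R)) = _
    exact lin_ev (g.f 0).hom _
  rw [psi, psi, psi, this, map_mul]

/-- the scalar chain map -/
noncomputable def sMap (a : ZMod (p ^ 2)) : CC ⟶ CC where
  f := fun _ => ModuleCat.ofHom (a • LinearMap.id)
  comm' := by
    intro i j hij
    have hij' : i + 1 = j := hij
    subst hij'
    apply ModuleCat.hom_ext
    apply LinearMap.ext
    intro (x : R)
    show @Eq R (((CC).d i (i+1)).hom (a • x)) (a • (((CC).d i (i+1)).hom x))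
    rw [Cx_d_apply, Cx_d_apply]
    exact mul_left_comm _ _ _

lemma psi_sMap (a : ZMod (p ^ 2)) : psi p (sMap p a) = pr p a := by
  have : ev p (sMap p a) 0 = a := by
    show a • (1 : R) = a
    rw [smul_eq_mul, mul_one]
  rw [psi, this]

set_option maxHeartbeats 1000000 in
noncomputable def PhiHom (hp : p.Prime) : End ((Q).obj CC) →+* ZMod p where
  toFun := Phi p
  map_one' := by
    have h1 : (1 : End ((Q).obj CC)) = (Q).map (𝟙 CC) := by
      rw [CategoryTheory.Functor.map_id]; rfl
    rw [h1, Phi_map]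
    show pr p (ev p (𝟙 CC) 0) = 1
    have : ev p (𝟙 CC) 0 = 1 := rfl
    rw [this, map_one]
  map_mul' := by
    intro F G
    have h1 : F * G = (Q).map (Quot.out G ≫ Quot.out F) := by
      rw [HomotopyCategory.quotient_map_out_comp_out]
      rfl
    rw [h1]
    show Phi p ((Q).map (Quot.out G ≫ Quot.out F)) = Phi p F * Phi p G
    rw [Phi_map]
    erw [psi_comp]
    erw [← Phi_map p (Quot.out G), ← Phi_map p (Quot.out F)]
    erw [HomotopyCategory.quotient_map_out, HomotopyCategory.quotient_map_out]
    ring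
  map_zero' := by
    have h1 : (0 : End ((Q).obj CC)) = (Q).map 0 := by rw [Functor.map_zero]
    rw [h1]
    show Phi p ((Q).map (0 : CC ⟶ CC)) = 0
    rw [Phi_map]
    show pr p (ev p (0 : CC ⟶ CC) 0) = 0
    have : ev p (0 : CC ⟶ CC) 0 = 0 := rfl
    rw [this, map_zero]
  map_add' := by
    intro F G
    have h1 : F + G = (Q).map (Quot.out F + Quot.out G) := by
      rw [Functor.map_add, HomotopyCategory.quotient_map_out, HomotopyCategory.quotient_map_out]
      rfl
    rw [h1]
    show Phi p ((Q).map (Quot.out F + Quot.out G)) = Phi p F + Phi p G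
    erw [Phi_map, psi_add]
    erw [← Phi_map p (Quot.out F), ← Phi_map p (Quot.out G),
      HomotopyCategory.quotient_map_out, HomotopyCategory.quotient_map_out]

set_option maxHeartbeats 1000000 in
lemma PhiHom_bij (hp : p.Prime) : Function.Bijective (PhiHom p hp) := by
  haveI : NeZero p := ⟨hp.ne_zero⟩
  constructor
  · intro F G hFG
    have hpsi : psi p (Quot.out F - Quot.out G) = 0 := by
      have h2 := psi_add p (Quot.out F - Quot.out G) (Quot.out G)
      erw [sub_add_cancel] at h2
      have hPP : (PhiHom p hp) F = psi p (Quot.out F) := rfl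
      have hPP' : (PhiHom p hp) G = psi p (Quot.out G) := rfl
      rw [hPP, hPP'] at hFG
      erw [hFG] at h2
      linear_combination -h2
    have H := nullHomotopy p hp _ hpsi
    have h3 := HomotopyCategory.eq_of_homotopy _ _ H
    erw [Functor.map_zero, Functor.map_sub,
      HomotopyCategory.quotient_map_out, HomotopyCategory.quotient_map_out,
      sub_eq_zero] at h3
    exact h3
  · intro a
    refine ⟨(Q).map (sMap p ((a.val : ℕ) : ZMod (p ^ 2))), ?_⟩
    show Phi p _ = a
    rw [Phi_map, psi_sMap]
    rw [pr, map_natCast]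
    exact ZMod.natCast_rightInverse a

theorem statement8' (hp : p.Prime) :
    Nonempty
      (End ((HomotopyCategory.quotient (ModuleCat (ZMod (p ^ 2)))
          (ComplexShape.up ℤ)).obj
        (Cx (ZMod (p ^ 2)) (p : ZMod (p ^ 2)) (p_mul_p p))) ≃+* ZMod p) :=
  ⟨RingEquiv.ofBijective (PhiHom p hp) (PhiHom_bij p hp)⟩

end main

/-- Let `p` be a prime and `R = ℤ/p²ℤ`. The endomorphism ring, in the homotopy category
`K(Mod R)`, of the complex `C` which is `R` in every degree with all differentials given by
multiplication by `p`, is isomorphic as a ring to `𝔽_p = ℤ/pℤ`; in particular it is a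
one-dimensional `𝔽_p`-vector space. -/
theorem statement8 (p : ℕ) (hp : p.Prime) :
    Nonempty
      (End ((HomotopyCategory.quotient (ModuleCat (ZMod (p ^ 2)))
          (ComplexShape.up ℤ)).obj
        (Cx (ZMod (p ^ 2)) (p : ZMod (p ^ 2)) (p_mul_p p))) ≃+* ZMod p) := by
  exact statement8' p hp

end Paper8
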